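/- For random variables X, Y with regular conditional distribution p(Y | X = x) having cumulative distribution function F_x, if E is uniformly distributed on [0,1] and independent of X, then the random variable f(X, E) with f(x, e) = F_x^{-1}(e) (generalized inverse) has conditional distribution given X = x equal to p(Y | X = x). -/

import Mathlib

open MeasureTheory ProbabilityTheory Set Filter Topology

private lemma cdf_mono (μ : Measure ℝ) [IsProbabilityMeasure μ] :
    Monotone fun y => (μ (Iic y)).toReal := fun a b hab =>
  ENNReal.toReal_mono (measure_ne_top μ _) (measure_mono (Iic_subset_Iic.2 hab))

private lemma quantile_le_iff (μ : Measure ℝ) [IsProbabilityMeasure μ] {e : ℝ}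
    (he0 : 0 < e) (he1 : e < 1) (y : ℝ) :
    sInf {z | e ≤ (μ (Iic z)).toReal} ≤ y ↔ e ≤ (μ (Iic y)).toReal := by
  set S := {z | e ≤ (μ (Iic z)).toReal} with hS
  have hne : S.Nonempty := by
    have ht : Tendsto (fun y => μ (Iic y)) atTop (𝓝 1) := by
      simpa using tendsto_measure_Iic_atTop μ
    have hlt : ENNReal.ofReal e < 1 := by
      rw [← ENNReal.ofReal_one]
      exact ENNReal.ofReal_lt_ofReal_iff_of_nonneg he0.le |>.2 he1
    obtain ⟨y, hy⟩ := (ht.eventually_const_lt hlt).exists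
    exact ⟨y, (ENNReal.ofReal_le_iff_le_toReal (measure_ne_top μ _)).1 hy.le⟩
  have hbdd : BddBelow S := by
    have ht : Tendsto (fun n : ℕ => μ (Iic (-(n : ℝ)))) atTop (𝓝 0) := by
      have h0 : (⋂ n : ℕ, Iic (-(n : ℝ))) = ∅ := by
        ext z
        simp only [mem_iInter, mem_Iic, mem_empty_iff_false, iff_false, not_forall, not_le]
        obtain ⟨n, hn⟩ := exists_nat_gt (-z)
        exact ⟨n, by linarith⟩
      have := tendsto_measure_iInter_atTop (μ := μ) (s := fun n : ℕ => Iic (-(n : ℝ)))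
        (fun n => measurableSet_Iic.nullMeasurableSet)
        (fun a b hab => Iic_subset_Iic.2 (by exact_mod_cast neg_le_neg (Nat.cast_le.2 hab)))
        ⟨0, measure_ne_top μ _⟩
      rw [h0] at this
      simpa [Function.comp_def] using this
    have hpos : (0 : ENNReal) < ENNReal.ofReal e := ENNReal.ofReal_pos.2 he0
    obtain ⟨n, hn⟩ := (ht.eventually_lt_const hpos).exists
    refine ⟨-(n : ℝ), fun z hz => ?_⟩
    by_contra hlt
    push_neg at hlt
    have h1 : ENNReal.ofReal e ≤ μ (Iic z) :=
      (ENNReal.ofReal_le_iff_le_toReal (measure_ne_top μ _)).2 hz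
    exact absurd (h1.trans (measure_mono (Iic_subset_Iic.2 hlt.le))) (not_le.2 hn)
  constructor
  · intro h
    have hc : e ≤ (μ (Iic (sInf S))).toReal := by
      have key : ∀ n : ℕ, e ≤ (μ (Iic (sInf S + 1 / (n + 1)))).toReal := by
        intro n
        obtain ⟨s, hsS, hslt⟩ := (csInf_lt_iff hbdd hne).1
          (lt_add_of_pos_right _ (Nat.one_div_pos_of_nat (n := n)))
        exact hsS.trans (cdf_mono μ hslt.le)
      have hiInter : (⋂ n : ℕ, Iic (sInf S + 1 / (n + 1))) = Iic (sInf S) := by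
        ext z
        simp only [mem_iInter, mem_Iic]
        constructor
        · intro hz
          refine le_of_forall_pos_le_add fun ε hε => ?_
          obtain ⟨n, hn⟩ := exists_nat_one_div_lt hε
          exact (hz n).trans (by linarith)
        · intro hz n
          exact hz.trans (le_add_of_nonneg_right Nat.one_div_pos_of_nat.le)
      have h1 : Tendsto (fun n : ℕ => μ (Iic (sInf S + 1 / (n + 1)))) atTop
          (𝓝 (μ (Iic (sInf S)))) := by
        have := tendsto_measure_iInter_atTop (μ := μ)
          (s := fun n : ℕ => Iic (sInf S + 1 / (n + 1)))
          (fun n => measurableSet_Iic.nullMeasurableSet)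
          (fun a b hab => Iic_subset_Iic.2 (by
            have : (1 : ℝ) / (b + 1) ≤ 1 / (a + 1) := by
              apply one_div_le_one_div_of_le
              · positivity
              · exact_mod_cast add_le_add_left (Nat.cast_le.2 hab) 1
            linarith))
          ⟨0, measure_ne_top μ _⟩
        rw [hiInter] at this
        exact this
      have h2 : Tendsto (fun n : ℕ => (μ (Iic (sInf S + 1 / (n + 1)))).toReal) atTop
          (𝓝 ((μ (Iic (sInf S))).toReal)) :=
        (ENNReal.tendsto_toReal (measure_ne_top μ _)).comp h1
      exact ge_of_tendsto h2 (Eventually.of_forall key)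
    exact hc.trans (cdf_mono μ h)
  · intro h
    exact csInf_le hbdd h

private lemma restrict_Icc_compl_Ioo :
    (volume.restrict (Icc (0 : ℝ) 1)) ((Ioo (0 : ℝ) 1)ᶜ) = 0 := by
  rw [Measure.restrict_apply measurableSet_Ioo.compl]
  have h1 : (Ioo (0 : ℝ) 1)ᶜ ∩ Icc 0 1 = {0, 1} := by
    rw [inter_comm, ← diff_eq, Icc_diff_Ioo_same (by norm_num : (0:ℝ) ≤ 1)]
  rw [h1]
  exact Set.Countable.measure_zero (by simp) _

private lemma map_quantile (μ : Measure ℝ) [IsProbabilityMeasure μ] (g : ℝ → ℝ)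
    (hg : Measurable g)
    (hga : ∀ e ∈ Ioo (0 : ℝ) 1, g e = sInf {z | e ≤ (μ (Iic z)).toReal}) :
    (volume.restrict (Icc (0 : ℝ) 1)).map g = μ := by
  haveI : IsProbabilityMeasure (volume.restrict (Icc (0 : ℝ) 1)) :=
    ⟨by simp [Real.volume_Icc]⟩
  haveI : IsProbabilityMeasure ((volume.restrict (Icc (0 : ℝ) 1)).map g) :=
    Measure.isProbabilityMeasure_map hg.aemeasurable
  refine Measure.ext_of_Iic _ _ fun y => ?_
  rw [Measure.map_apply hg measurableSet_Iic]
  set c := (μ (Iic y)).toReal with hc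
  have hc0 : 0 ≤ c := ENNReal.toReal_nonneg
  have hc1 : c ≤ 1 := by
    rw [hc]
    calc (μ (Iic y)).toReal ≤ (μ univ).toReal :=
          ENNReal.toReal_mono (measure_ne_top μ _) (measure_mono (subset_univ _))
    _ = 1 := by simp
  have h1 : ∀ᵐ e ∂(volume.restrict (Icc (0 : ℝ) 1)), e ∈ Ioo (0 : ℝ) 1 :=
    mem_ae_iff.2 restrict_Icc_compl_Ioo
  have hae : (g ⁻¹' Iic y : Set ℝ) =ᵐ[volume.restrict (Icc (0 : ℝ) 1)]
      ((Ioo (0 : ℝ) 1 ∩ Iic c : Set ℝ)) := by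
    rw [Filter.eventuallyEq_set]
    filter_upwards [h1] with e he
    simp only [mem_preimage, mem_Iic, mem_inter_iff, he, true_and]
    rw [hga e he]
    exact quantile_le_iff μ he.1 he.2 y
  rw [measure_congr hae, Measure.restrict_apply (measurableSet_Ioo.inter measurableSet_Iic)]
  have hsub : Ioo (0 : ℝ) 1 ∩ Iic c ∩ Icc 0 1 = Ioo 0 1 ∩ Iic c :=
    inter_eq_left.2 fun z hz => ⟨hz.1.1.le, hz.1.2.le⟩
  rw [hsub]
  have hvol : volume (Ioo (0 : ℝ) 1 ∩ Iic c) = ENNReal.ofReal c := by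
    by_cases hlt : c < 1
    · have : Ioo (0 : ℝ) 1 ∩ Iic c = Ioc 0 c := by
        ext z
        constructor
        · rintro ⟨⟨h1, _⟩, h2⟩; exact ⟨h1, h2⟩
        · rintro ⟨h1, h2⟩; exact ⟨⟨h1, lt_of_le_of_lt h2 hlt⟩, h2⟩
      rw [this, Real.volume_Ioc, sub_zero]
    · have hceq : c = 1 := le_antisymm hc1 (not_lt.1 hlt)
      have : Ioo (0 : ℝ) 1 ∩ Iic c = Ioo 0 1 :=
        inter_eq_left.2 fun z hz => hceq ▸ (hz.2.le : z ≤ 1)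
      rw [this, Real.volume_Ioo, hceq]
      norm_num
  rw [hvol, hc, ENNReal.ofReal_toReal (measure_ne_top μ _)]

theorem structural_representation_of_conditional
    {Ω α : Type*} [MeasurableSpace Ω] [StandardBorelSpace Ω] [Nonempty Ω]
    [MeasurableSpace α]
    (P : Measure Ω) [IsProbabilityMeasure P]
    (X : Ω → α) (E : Ω → ℝ) (hX : Measurable X) (hE : Measurable E)
    (κ : ProbabilityTheory.Kernel α ℝ) [ProbabilityTheory.IsMarkovKernel κ]
    (F : α → ℝ → ℝ) (hF : ∀ x y, F x y = (κ x (Iic y)).toReal)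
    (f : α → ℝ → ℝ) (hf : ∀ x e, f x e = sInf {y : ℝ | e ≤ F x y})
    (hunif : P.map E = volume.restrict (Icc (0 : ℝ) 1))
    (hindep : IndepFun X E P)
    (hmeas : Measurable fun ω => f (X ω) (E ω)) :
    ∀ᵐ x ∂(P.map X), condDistrib (fun ω => f (X ω) (E ω)) X P x = κ x := by
  set μE := volume.restrict (Icc (0 : ℝ) 1) with hμE
  haveI : IsProbabilityMeasure μE := ⟨by simp [hμE, Real.volume_Icc]⟩
  set h : α × ℝ → ℝ := fun p => if p.2 ∈ Ioo (0 : ℝ) 1 then f p.1 p.2 else 0 with hh_def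
  have hFmeas : ∀ y, Measurable fun x => F x y := by
    intro y
    simp only [hF]
    exact (Kernel.measurable_coe κ measurableSet_Iic).ennreal_toReal
  have hfiff : ∀ (x : α) {e : ℝ}, e ∈ Ioo (0 : ℝ) 1 → ∀ y, (f x e ≤ y ↔ e ≤ F x y) := by
    intro x e he y
    rw [hf, hF]
    have : {y : ℝ | e ≤ F x y} = {z : ℝ | e ≤ (κ x (Iic z)).toReal} := by
      simp only [hF]
    rw [this]
    exact quantile_le_iff (κ x) he.1 he.2 y
  have hh : Measurable h := by
    apply measurable_of_Iic
    intro y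
    have hpre : h ⁻¹' Iic y =
        ((univ ×ˢ Ioo (0 : ℝ) 1) ∩ {p : α × ℝ | p.2 ≤ F p.1 y}) ∪
        ((univ ×ˢ (Ioo (0 : ℝ) 1)ᶜ) ∩ {p : α × ℝ | (0 : ℝ) ≤ y}) := by
      ext p
      by_cases hp : p.2 ∈ Ioo (0 : ℝ) 1
      · simp only [mem_preimage, mem_Iic, hh_def, if_pos hp, mem_union, mem_inter_iff,
          mem_prod, mem_univ, true_and, hp, mem_setOf_eq, mem_compl_iff, not_true_eq_false,
          false_and, or_false]
        exact hfiff p.1 hp y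
      · have h0 : h p = 0 := if_neg hp
        simp [mem_preimage, mem_Iic, h0, hp]
    rw [hpre]
    refine MeasurableSet.union ?_ ?_
    · exact (MeasurableSet.univ.prod measurableSet_Ioo).inter
        (measurableSet_le measurable_snd ((hFmeas y).comp measurable_fst))
    · refine (MeasurableSet.univ.prod measurableSet_Ioo.compl).inter ?_
      by_cases h0 : (0 : ℝ) ≤ y <;> simp [h0]
  have key : ∀ x : α, μE.map (fun e => h (x, e)) = κ x := by
    intro x
    refine map_quantile (κ x) _ (hh.comp measurable_prodMk_left) fun e he => ?_
    simp only [hh_def, if_pos he]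
    rw [hf]
    congr 1
    simp only [hF]
  have hpair : P.map (fun ω => (X ω, E ω)) = (P.map X).prod μE := by
    rw [← hunif]
    exact (indepFun_iff_map_prod_eq_prod_map_map hX.aemeasurable hE.aemeasurable).1 hindep
  have hEae : ∀ᵐ ω ∂P, E ω ∈ Ioo (0 : ℝ) 1 := by
    have h0 : P.map E ((Ioo (0 : ℝ) 1)ᶜ) = 0 := by
      rw [hunif]; exact restrict_Icc_compl_Ioo
    rw [Measure.map_apply hE measurableSet_Ioo.compl] at h0
    refine mem_ae_iff.2 ?_
    have hsets : {ω | (fun ω => E ω ∈ Ioo (0:ℝ) 1) ω}ᶜ = E ⁻¹' (Ioo (0:ℝ) 1)ᶜ := by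
      ext ω; simp
    rw [hsets]; exact h0
  have hYeq : (fun ω => (X ω, f (X ω) (E ω))) =ᵐ[P] fun ω => (X ω, h (X ω, E ω)) := by
    filter_upwards [hEae] with ω hω
    have h1 : h (X ω, E ω) = f (X ω) (E ω) := if_pos hω
    rw [h1]
  have hGmeas : Measurable fun p : α × ℝ => (p.1, h p) := measurable_fst.prodMk hh
  have hmain : P.map (fun ω => (X ω, f (X ω) (E ω))) = (P.map X) ⊗ₘ κ := by
    rw [Measure.map_congr hYeq]
    have hcomp : (fun ω => (X ω, h (X ω, E ω))) =
        (fun p : α × ℝ => (p.1, h p)) ∘ fun ω => (X ω, E ω) := rfl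
    rw [hcomp, ← Measure.map_map hGmeas (hX.prodMk hE), hpair]
    haveI : IsProbabilityMeasure (P.map X) := Measure.isProbabilityMeasure_map hX.aemeasurable
    haveI : IsProbabilityMeasure (((P.map X).prod μE).map fun p : α × ℝ => (p.1, h p)) :=
      Measure.isProbabilityMeasure_map hGmeas.aemeasurable
    refine ext_of_generate_finite _ generateFrom_prod.symm isPiSystem_prod ?_ (by simp)
    rintro _ ⟨s, hs, t, ht, rfl⟩
    simp only [mem_setOf_eq] at hs ht
    rw [Measure.map_apply hGmeas (hs.prod ht), Measure.compProd_apply_prod hs ht]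
    have hpre : (fun p : α × ℝ => (p.1, h p)) ⁻¹' (s ×ˢ t) =
        {p : α × ℝ | p.1 ∈ s ∧ h p ∈ t} := by
      ext p; simp [mem_prod]
    rw [hpre, Measure.prod_apply]
    · have heq : ∀ x : α, μE (Prod.mk x ⁻¹' {p : α × ℝ | p.1 ∈ s ∧ h p ∈ t}) =
          s.indicator (fun x => κ x t) x := by
        intro x
        by_cases hx : x ∈ s
        · have : Prod.mk x ⁻¹' {p : α × ℝ | p.1 ∈ s ∧ h p ∈ t} =
              (fun e => h (x, e)) ⁻¹' t := by
            ext e; simp [hx]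
          rw [this, indicator_of_mem hx, ← key x,
            Measure.map_apply (show Measurable fun e => h (x, e) from
              hh.comp measurable_prodMk_left) ht]
        · have : Prod.mk x ⁻¹' {p : α × ℝ | p.1 ∈ s ∧ h p ∈ t} = ∅ := by
            ext e; simp [hx]
          rw [this, indicator_of_notMem hx, measure_empty]
      simp_rw [heq]
      exact lintegral_indicator hs _
    · exact (measurable_fst hs).inter (hh ht)
  have hfinal := condDistrib_ae_eq_of_measure_eq_compProd X hmeas.aemeasurable hmain
  filter_upwards [hfinal] with x hx using hx
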